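/- Let T be a finite tree in which all vertices of degree ≥ 3 are pairwise at even distance (bipartite ramification structure). Then f(T) = (number of leaves of T) − 2, provided T has at least one vertex of degree ≥ 3. -/

import Mathlib

open Classical

/-- Degree of a vertex. -/
noncomputable def deg {V : Type*} (G : SimpleGraph V) (v : V) : ℕ :=
  Nat.card {u // G.Adj v u}

/-- A set of edges is flattening if deleting them leaves max degree ≤ 2. -/
def Flattening {V : Type*} (G : SimpleGraph V) (F : Set (Sym2 V)) : Prop :=
  F ⊆ G.edgeSet ∧ ∀ v, deg (G.deleteEdges F) v ≤ 2

/-- The flattening number: minimal size of a flattening edge set. -/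
noncomputable def flatNum {V : Type*} [Fintype V] (G : SimpleGraph V) : ℕ :=
  sInf {n | ∃ F : Finset (Sym2 V), Flattening G ↑F ∧ F.card = n}


section Aux
variable {V : Type*} [Fintype V] [DecidableEq V]

set_option linter.unusedSectionVars false in
private lemma deg_eq_card (G : SimpleGraph V) (v : V) [DecidablePred (G.Adj v)] :
    deg G v = (Finset.univ.filter (G.Adj v)).card := by
  rw [deg, Nat.card_eq_fintype_card, Fintype.card_subtype]

private lemma deg_eq_degree (G : SimpleGraph V) [DecidableRel G.Adj] (v : V) :
    deg G v = G.degree v := by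
  rw [deg_eq_card]
  simp [SimpleGraph.degree, SimpleGraph.neighborFinset, SimpleGraph.neighborSet,
    Set.toFinset_setOf]
  congr 1; ext; simp only [Finset.mem_filter, Finset.mem_univ, true_and]; convert (Set.mem_toFinset (s := {w | G.Adj v w})).symm
  · exact Iff.rfl
  · exact Set.toFinset_congr rfl

private lemma deg_del (G : SimpleGraph V) [DecidableRel G.Adj] (F : Finset (Sym2 V))
    (hF : ↑F ⊆ G.edgeSet) (v : V) :
    deg (G.deleteEdges ↑F) v + (F.filter (fun e => v ∈ e)).card = deg G v := by
  classical
  have h1 : deg (G.deleteEdges ↑F) v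
      = (Finset.univ.filter (fun u => G.Adj v u ∧ s(v,u) ∉ F)).card := by
    rw [deg_eq_card]
    congr 1
    ext u
    simp [SimpleGraph.deleteEdges_adj]
  have h2 : (Finset.univ.filter (fun u => G.Adj v u ∧ s(v,u) ∈ F)).card
      = (F.filter (fun e => v ∈ e)).card := by
    apply Finset.card_bij (fun u _ => s(v,u))
    · intro u hu
      simp only [Finset.mem_filter, Finset.mem_univ, true_and] at hu ⊢
      exact ⟨hu.2, by simp⟩
    · intro u₁ h₁ u₂ h₂ h
      simp only [Finset.mem_filter, Finset.mem_univ, true_and] at h₁ h₂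
      rw [Sym2.eq_iff] at h
      rcases h with ⟨-, h⟩ | ⟨h, h'⟩
      · exact h
      · subst h'; exact absurd h₁.1 (by rw [h]; exact G.irrefl)
    · intro e he
      simp only [Finset.mem_filter] at he
      obtain ⟨heF, hve⟩ := he
      obtain ⟨u, rfl⟩ := Sym2.mem_iff_exists.mp hve
      have hadj : G.Adj v u := (G.mem_edgeSet).mp (hF heF)
      exact ⟨u, by simp [hadj, heF], rfl⟩
  have h3 := Finset.card_filter_add_card_filter_not
    (s := Finset.univ.filter (G.Adj v)) (p := fun u => s(v,u) ∈ F)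
  simp only [Finset.filter_filter] at h3
  rw [h1, ← h2, deg_eq_card]
  omega

private lemma deg_del_le (G : SimpleGraph V) [DecidableRel G.Adj] (F : Finset (Sym2 V))
    (hF : ↑F ⊆ G.edgeSet) (v : V) : deg (G.deleteEdges ↑F) v ≤ deg G v := by
  have := deg_del G F hF v; omega

end Aux

theorem flatNum_bipartite_ramification {V : Type*} [Fintype V] (G : SimpleGraph V)
    (hT : G.IsTree) (hbr : ∃ v, 3 ≤ deg G v)
    (heven : ∀ u v : V, 3 ≤ deg G u → 3 ≤ deg G v → Even (G.dist u v)) :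
    flatNum G = Nat.card {v : V // deg G v = 1} - 2 := by
  classical
  have hnadj : ∀ u v : V, 3 ≤ deg G u → 3 ≤ deg G v → ¬ G.Adj u v := by
    intro u v hu hv hadj
    have h1 : G.dist u v = 1 := SimpleGraph.dist_eq_one_iff_adj.mpr hadj
    have h2 := heven u v hu hv
    rw [h1] at h2
    simp at h2
  set B : Finset V := Finset.univ.filter (fun v => 3 ≤ deg G v) with hBdef
  have hBmem : ∀ v, v ∈ B ↔ 3 ≤ deg G v := by
    intro v; simp [hBdef]
  set k : ℕ := ∑ v ∈ B, (deg G v - 2) with hkdef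
  -- Lower bound
  have hlow : ∀ n ∈ {n | ∃ F : Finset (Sym2 V), Flattening G ↑F ∧ F.card = n}, k ≤ n := by
    intro n hn
    obtain ⟨F, ⟨hFe, hFd⟩, rfl⟩ := hn
    have hdisj : ∀ v ∈ B, ∀ w ∈ B, v ≠ w →
        Disjoint (F.filter (fun e => v ∈ e)) (F.filter (fun e => w ∈ e)) := by
      intro v hv w hw hvw
      rw [Finset.disjoint_left]
      intro e hev hew
      simp only [Finset.mem_filter] at hev hew
      obtain ⟨u, rfl⟩ := Sym2.mem_iff_exists.mp hev.2
      have hadj : G.Adj v u := (G.mem_edgeSet).mp (hFe hev.1)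
      have hwu : w = u := by
        rcases Sym2.mem_iff.mp hew.2 with h | h
        · exact absurd h.symm hvw
        · exact h
      subst hwu
      exact hnadj v w ((hBmem v).mp hv) ((hBmem w).mp hw) hadj
    calc k ≤ ∑ v ∈ B, (F.filter (fun e => v ∈ e)).card := by
            apply Finset.sum_le_sum
            intro v hv
            have h1 := deg_del G F hFe v
            have h2 := hFd v
            omega
      _ = (B.biUnion (fun v => F.filter (fun e => v ∈ e))).card :=
            (Finset.card_biUnion hdisj).symm
      _ ≤ F.card := Finset.card_le_card (Finset.biUnion_subset.mpr
            (fun v _ => Finset.filter_subset _ _))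
  -- Upper bound construction
  have hch : ∀ v : V, ∃ t ⊆ G.neighborFinset v, t.card = deg G v - 2 := by
    intro v
    apply Finset.exists_subset_card_eq
    have h : (G.neighborFinset v).card = deg G v := by
      rw [deg_eq_degree]; rfl
    omega
  choose S hS1 hS2 using hch
  have hSadj : ∀ v, ∀ u ∈ S v, G.Adj v u := fun v u hu =>
    (SimpleGraph.mem_neighborFinset G v u).mp (hS1 v hu)
  set F : Finset (Sym2 V) := B.biUnion (fun v => (S v).image (fun u => s(v,u))) with hFdef
  have hFmem : ∀ e, e ∈ F ↔ ∃ v ∈ B, ∃ u ∈ S v, s(v,u) = e := by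
    intro e
    simp [hFdef]
  have hFe : ↑F ⊆ G.edgeSet := by
    intro e he
    rw [Finset.mem_coe, hFmem] at he
    obtain ⟨v, _, u, hu, rfl⟩ := he
    exact (G.mem_edgeSet).mpr (hSadj v u hu)
  have himg_card : ∀ v ∈ B, ((S v).image (fun u => s(v,u))).card = deg G v - 2 := by
    intro v _
    rw [Finset.card_image_of_injOn, hS2]
    intro u₁ h₁ u₂ h₂ h
    rw [Sym2.eq_iff] at h
    rcases h with ⟨-, h⟩ | ⟨h1, h2⟩
    · exact h
    · have hh := hSadj v u₁ h₁
      rw [h2] at hh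
      exact absurd hh (G.irrefl)
  have hdisjF : ∀ v ∈ B, ∀ w ∈ B, v ≠ w →
      Disjoint ((S v).image (fun u => s(v,u))) ((S w).image (fun u => s(w,u))) := by
    intro v hv w hw hvw
    rw [Finset.disjoint_left]
    rintro e he hew
    obtain ⟨u, hu, rfl⟩ := Finset.mem_image.mp he
    obtain ⟨u', hu', heq⟩ := Finset.mem_image.mp hew
    rw [Sym2.eq_iff] at heq
    rcases heq with ⟨h1, -⟩ | ⟨h1, h2⟩
    · exact hvw h1.symm
    · subst h1
      exact hnadj v w ((hBmem v).mp hv) ((hBmem w).mp hw) (hSadj v w hu)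
  have hFcard : F.card = k := by
    rw [hFdef, Finset.card_biUnion hdisjF, hkdef]
    exact Finset.sum_congr rfl himg_card
  have hflat : Flattening G ↑F := by
    refine ⟨hFe, fun w => ?_⟩
    by_cases hw : 3 ≤ deg G w
    · have hsub : (S w).image (fun u => s(w,u)) ⊆ F.filter (fun e => w ∈ e) := by
        intro e he
        rw [Finset.mem_filter]
        refine ⟨(hFmem e).mpr ⟨w, (hBmem w).mpr hw, ?_⟩, ?_⟩
        · obtain ⟨u, hu, rfl⟩ := Finset.mem_image.mp he
          exact ⟨u, hu, rfl⟩
        · obtain ⟨u, hu, rfl⟩ := Finset.mem_image.mp he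
          simp
      have hcard : deg G w - 2 ≤ (F.filter (fun e => w ∈ e)).card := by
        rw [← himg_card w ((hBmem w).mpr hw)]
        exact Finset.card_le_card hsub
      have h := deg_del G F hFe w
      omega
    · have h := deg_del_le G F hFe w
      omega
  have hk_mem : k ∈ {n | ∃ F : Finset (Sym2 V), Flattening G ↑F ∧ F.card = n} :=
    ⟨F, hflat, hFcard⟩
  have hflatk : flatNum G = k :=
    le_antisymm (Nat.sInf_le hk_mem) (le_csInf ⟨k, hk_mem⟩ hlow)
  -- Counting
  obtain ⟨b, hb⟩ := hbr
  have hcard2 : 1 < Fintype.card V := by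
    have hpos : 0 < G.degree b := by
      rw [← deg_eq_degree]; omega
    obtain ⟨u, hu⟩ := (G.degree_pos_iff_exists_adj b).mp hpos
    exact Fintype.one_lt_card_iff.mpr ⟨b, u, G.ne_of_adj hu⟩
  have hpos : ∀ v : V, 1 ≤ deg G v := by
    intro v
    rw [deg_eq_degree]
    refine (G.degree_pos_iff_exists_adj v).mpr ?_
    obtain ⟨w, hw⟩ := Fintype.exists_ne_of_one_lt_card hcard2 v
    obtain ⟨p⟩ := hT.isConnected.preconnected v w
    cases p with
    | nil => exact absurd rfl hw
    | cons h q => exact ⟨_, h⟩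
  set L2 : Finset V := Finset.univ.filter (fun v => deg G v = 1) with hLdef
  set D : Finset V := Finset.univ.filter (fun v => deg G v = 2) with hDdef
  have hd1 : Disjoint B L2 := by
    rw [Finset.disjoint_left]
    intro v hv hv'
    rw [hBdef, Finset.mem_filter] at hv
    rw [hLdef, Finset.mem_filter] at hv'
    omega
  have hd2 : Disjoint (B ∪ L2) D := by
    rw [Finset.disjoint_left]
    intro v hv hv'
    rw [Finset.mem_union, hBdef, hLdef, Finset.mem_filter, Finset.mem_filter] at hv
    rw [hDdef, Finset.mem_filter] at hv'
    rcases hv with h | h <;> omega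
  have hunion : (B ∪ L2) ∪ D = Finset.univ := by
    ext v
    simp only [Finset.mem_union, hBdef, hLdef, hDdef, Finset.mem_filter, Finset.mem_univ,
      true_and, iff_true]
    have := hpos v
    omega
  have hsum : ∑ v ∈ B, deg G v + ∑ v ∈ L2, deg G v + ∑ v ∈ D, deg G v = ∑ v, deg G v := by
    rw [← Finset.sum_union hd1, ← Finset.sum_union hd2, hunion]
  have hcards : B.card + L2.card + D.card = Fintype.card V := by
    rw [← Finset.card_union_of_disjoint hd1, ← Finset.card_union_of_disjoint hd2, hunion,
      Finset.card_univ]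
  have hsumL : ∑ v ∈ L2, deg G v = L2.card := by
    calc ∑ v ∈ L2, deg G v = ∑ _v ∈ L2, 1 := by
          apply Finset.sum_congr rfl
          intro v hv
          rw [hLdef, Finset.mem_filter] at hv
          exact hv.2
      _ = L2.card := by simp
  have hsumD : ∑ v ∈ D, deg G v = 2 * D.card := by
    calc ∑ v ∈ D, deg G v = ∑ _v ∈ D, 2 := by
          apply Finset.sum_congr rfl
          intro v hv
          rw [hDdef, Finset.mem_filter] at hv
          exact hv.2
      _ = 2 * D.card := by simp [mul_comm]
  have hE3 : k + 2 * B.card = ∑ v ∈ B, deg G v := by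
    calc k + 2 * B.card = ∑ v ∈ B, (deg G v - 2) + ∑ _v ∈ B, 2 := by
          rw [hkdef]; simp [mul_comm]
      _ = ∑ v ∈ B, ((deg G v - 2) + 2) := Finset.sum_add_distrib.symm
      _ = ∑ v ∈ B, deg G v := by
          apply Finset.sum_congr rfl
          intro v hv
          rw [hBdef, Finset.mem_filter] at hv
          omega
  have hE4 : 1 ≤ B.card := Finset.card_pos.mpr ⟨b, (hBmem b).mpr hb⟩
  have hsum_univ : ∑ v, deg G v = 2 * G.edgeFinset.card := by
    calc ∑ v, deg G v = ∑ v, G.degree v :=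
          Finset.sum_congr rfl (fun v _ => deg_eq_degree G v)
      _ = 2 * G.edgeFinset.card := G.sum_degrees_eq_twice_card_edges
  have htree : G.edgeFinset.card + 1 = Fintype.card V := hT.card_edgeFinset
  have hLeaf : Nat.card {v : V // deg G v = 1} = L2.card := by
    rw [Nat.card_eq_fintype_card, hLdef, Fintype.card_subtype]
  rw [hflatk, hLeaf]
  omega
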